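/- Let n ≥ 1 and 0 ≤ d ≤ n, and let ρ_S be an (n+1)×(n+1) complex matrix with rows and columns indexed by 0, …, n. Define the 2ⁿ×2ⁿ matrix ρ with entries indexed by bitstrings i, j ∈ {0,1}ⁿ by ρ^{i}_{j} = (ρ_S)^{|i|}_{|j|} / √( C(n,|i|)·C(n,|j|) ), where |i| denotes the number of ones of a bitstring (this is the expansion to the full space of a matrix supported on the symmetric subspace). Then for all bitstrings i', j' ∈ {0,1}^d, the partial trace over the last n − d qubits satisfies Σ_{w ∈ {0,1}^{n−d}} ρ^{(i',w)}_{(j',w)} = Σ_{k=0}^{n−d} C(n−d, k) · (ρ_S)^{k+|i'|}_{k+|j'|} / √( C(n, k+|i'|)·C(n, k+|j'|) ), where (i',w) denotes the concatenated bitstring of length n. -/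

import Mathlib

noncomputable section

/-- The weight (number of ones) of a bitstring. -/
def wt {N : ℕ} (f : Fin N → Fin 2) : ℕ := (Finset.univ.filter fun i => f i = 1).card

/-- Concatenation of a bitstring of length `d` with one of length `n − d` (with `d ≤ n`)
into a bitstring of length `n`. -/
def conc (n d : ℕ) (hd : d ≤ n) (i' : Fin d → Fin 2) (w : Fin (n - d) → Fin 2) :
    Fin n → Fin 2 :=
  fun i => if h : (i : ℕ) < d then i' ⟨i, h⟩
    else w ⟨(i : ℕ) - d, by have := i.isLt; omega⟩

lemma wt_conc (n d : ℕ) (hd : d ≤ n) (i' : Fin d → Fin 2) (w : Fin (n - d) → Fin 2) :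
    wt (conc n d hd i' w) = wt i' + wt w := by
  classical
  unfold wt
  have hsplit := Finset.card_filter_add_card_filter_not
    (s := Finset.univ.filter fun i : Fin n => conc n d hd i' w i = 1)
    (p := fun i : Fin n => (i : ℕ) < d)
  rw [Finset.filter_filter, Finset.filter_filter] at hsplit
  rw [← hsplit]
  congr 1
  · apply Finset.card_bij' (fun (i : Fin n) hi => (⟨(i : ℕ), by
        simp only [Finset.mem_filter] at hi; exact hi.2.2⟩ : Fin d))
      (fun (j : Fin d) _ => (⟨(j : ℕ), by have := j.isLt; omega⟩ : Fin n))
    next => intro a ha; rfl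
    next => intro a ha; rfl
    next =>
      intro a ha
      simp only [Finset.mem_filter, Finset.mem_univ, true_and] at ha ⊢
      have h := ha.1
      simpa [conc, ha.2] using h
    next =>
      intro a ha
      simp only [Finset.mem_filter, Finset.mem_univ, true_and] at ha ⊢
      refine ⟨?_, a.isLt⟩
      simpa [conc, a.isLt] using ha
  · apply Finset.card_bij' (fun (i : Fin n) hi => (⟨(i : ℕ) - d, by
        simp only [Finset.mem_filter, not_lt] at hi
        have := i.isLt; omega⟩ : Fin (n - d)))
      (fun (j : Fin (n - d)) _ => (⟨(j : ℕ) + d, by have := j.isLt; omega⟩ : Fin n))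
    next =>
      intro a ha
      simp only [Finset.mem_filter, not_lt] at ha
      apply Fin.ext
      simp only [Fin.val_mk]
      omega
    next =>
      intro a ha
      apply Fin.ext
      simp only [Fin.val_mk]
      omega
    next =>
      intro a ha
      simp only [Finset.mem_filter, Finset.mem_univ, true_and, not_lt] at ha ⊢
      have h := ha.1
      rw [conc, dif_neg (by omega)] at h
      exact h
    next =>
      intro a ha
      simp only [Finset.mem_filter, Finset.mem_univ, true_and, not_lt] at ha ⊢
      have := a.isLt
      refine ⟨?_, by omega⟩
      rw [conc, dif_neg (by simp only [Fin.val_mk]; omega)]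
      convert ha using 3
      simp only [Fin.val_mk]
      omega

lemma wt_le {N : ℕ} (f : Fin N → Fin 2) : wt f ≤ N := by
  unfold wt
  calc (Finset.univ.filter fun i => f i = 1).card ≤ (Finset.univ : Finset (Fin N)).card :=
        Finset.card_filter_le _ _
    _ = N := by simp

lemma card_wt (N k : ℕ) :
    (Finset.univ.filter fun w : Fin N → Fin 2 => wt w = k).card = N.choose k := by
  classical
  have hp := Finset.card_powersetCard k (Finset.univ : Finset (Fin N))
  rw [Finset.card_univ, Fintype.card_fin] at hp
  rw [← hp]
  apply Finset.card_bij' (fun (w : Fin N → Fin 2) _ => Finset.univ.filter fun i => w i = 1)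
    (fun (s : Finset (Fin N)) _ => fun i => if i ∈ s then 1 else 0)
  · intro w hw
    simp only [Finset.mem_filter, Finset.mem_univ, true_and] at hw
    rw [Finset.mem_powersetCard]
    exact ⟨Finset.subset_univ _, hw⟩
  · intro s hs
    rw [Finset.mem_powersetCard] at hs
    rw [Finset.mem_filter]
    simp only [Finset.mem_univ, true_and, wt]
    rw [← hs.2]
    congr 1
    ext i
    simp
  · intro w hw
    funext i
    simp only [Finset.mem_filter, Finset.mem_univ, true_and]
    by_cases h : w i = 1
    · simp [h]
    · simp [h]
      omega
  · intro s hs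
    ext i
    simp only [Finset.mem_filter, Finset.mem_univ, true_and]
    by_cases h : i ∈ s <;> simp [h]

/-- Theorem: for a matrix `ρ` which is the expansion to the full `n`-qubit space of a matrix
`ρS` supported on the symmetric subspace, i.e. `ρ^i_j = (ρS)^{|i|}_{|j|} / √(C(n,|i|)C(n,|j|))`,
the partial trace over the last `n − d` qubits is given by
`(Tr_{n−d} ρ)^{i'}_{j'} = Σ_{k=0}^{n−d} C(n−d,k) (ρS)^{k+|i'|}_{k+|j'|} / √(C(n,k+|i'|)C(n,k+|j'|))`. -/
theorem stmt_13 (n d : ℕ) (hn : 1 ≤ n) (hd : d ≤ n) (ρS : ℕ → ℕ → ℂ)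
    (ρ : Matrix (Fin n → Fin 2) (Fin n → Fin 2) ℂ)
    (hρ : ∀ i j : Fin n → Fin 2,
      ρ i j = ρS (wt i) (wt j) / (((Real.sqrt ((n.choose (wt i)) * (n.choose (wt j))) : ℝ)) : ℂ)) :
    ∀ i' j' : Fin d → Fin 2,
      ∑ w : Fin (n - d) → Fin 2, ρ (conc n d hd i' w) (conc n d hd j' w)
        = ∑ k ∈ Finset.range (n - d + 1),
            ((n - d).choose k : ℂ) * ρS (k + wt i') (k + wt j')
              / (((Real.sqrt ((n.choose (k + wt i')) * (n.choose (k + wt j'))) : ℝ)) : ℂ) := by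
  classical
  intro i' j'
  rw [← Finset.sum_fiberwise_of_maps_to (g := fun w : Fin (n - d) → Fin 2 => wt w)
    (t := Finset.range (n - d + 1))
    (fun w _ => Finset.mem_range.mpr (Nat.lt_succ_of_le (wt_le w)))]
  apply Finset.sum_congr rfl
  intro k hk
  have : ∀ w ∈ Finset.univ.filter fun w : Fin (n - d) → Fin 2 => wt w = k,
      ρ (conc n d hd i' w) (conc n d hd j' w)
        = ρS (k + wt i') (k + wt j')
            / (((Real.sqrt ((n.choose (k + wt i')) * (n.choose (k + wt j'))) : ℝ)) : ℂ) := by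
    intro w hw
    simp only [Finset.mem_filter] at hw
    rw [hρ, wt_conc, wt_conc, hw.2, Nat.add_comm (wt i') k, Nat.add_comm (wt j') k]
  rw [Finset.sum_congr rfl this, Finset.sum_const, card_wt, nsmul_eq_mul, mul_div_assoc]
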